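/- For any V ⊆ A₀, the dual V* equals the closure (in the topology of locally uniform convergence on the unit disk) of (cm V)^T, where (cm V)^T = { g analytic on a neighborhood of the closed unit disk, g(0)=1, with (f*g)(1) ≠ 0 for all f ∈ cm(V) }. -/

import Mathlib

open Metric Set Filter
open scoped UniformConvergence

noncomputable def coeff (f : ℂ → ℂ) (k : ℕ) : ℂ := iteratedDeriv k f 0 / (k.factorial : ℂ)

noncomputable def hadamard (f g : ℂ → ℂ) : ℂ → ℂ := fun z => ∑' k : ℕ, coeff f k * coeff g k * z ^ k

def Pt (x : ℂ) (f : ℂ → ℂ) : ℂ → ℂ := fun z => f (x * z)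

def A0 : Set (ℂ → ℂ) := {f | AnalyticOnNhd ℂ f (ball (0:ℂ) 1) ∧ f 0 = 1}

def cm (V : Set (ℂ → ℂ)) : Set (ℂ → ℂ) := {h | ∃ f ∈ V, ∃ x : ℂ, ‖x‖ ≤ 1 ∧ h = Pt x f}

def dual (V : Set (ℂ → ℂ)) : Set (ℂ → ℂ) :=
  {g ∈ A0 | ∀ f ∈ V, ∀ z ∈ ball (0:ℂ) 1, hadamard f g z ≠ 0}

def eligible (g : ℂ → ℂ) : Prop := ∃ R > 1, AnalyticOnNhd ℂ g (ball (0:ℂ) R)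

def VT (V : Set (ℂ → ℂ)) : Set (ℂ → ℂ) :=
  {g | eligible g ∧ g 0 = 1 ∧ ∀ f ∈ V, hadamard f g 1 ≠ 0}

def perp (U : Set (ℂ → ℂ)) : Set (ℂ → ℂ) :=
  {h ∈ A0 | ∀ g ∈ U, hadamard g h 1 ≠ 0}

def lamSet (g : ℂ → ℂ) (V : Set (ℂ → ℂ)) : Set ℂ := (fun f => hadamard f g 1) '' V

def S (R : ℝ) : Set (Set ℂ) := {K | K ⊆ ball (0:ℂ) R ∧ IsCompact K}

noncomputable def closLU (R : ℝ) (U : Set (ℂ → ℂ)) : Set (ℂ → ℂ) :=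
  (UniformOnFun.toFun (S R)) '' closure ((UniformOnFun.ofFun (S R)) '' U)

lemma coeff_zero_eq (f : ℂ → ℂ) : coeff f 0 = f 0 := by
  simp [coeff]

lemma coeff_eq_seriesCoeff {f : ℂ → ℂ} {p : FormalMultilinearSeries ℂ ℂ ℂ} {r : ENNReal}
    (h : HasFPowerSeriesOnBall f p 0 r) (n : ℕ) : coeff f n = p.coeff n := by
  have h1 := h.factorial_smul (1 : ℂ) n
  have h2 : iteratedDeriv n f 0 = iteratedFDeriv ℂ n f 0 (fun _ => 1) :=
    iteratedDeriv_eq_iteratedFDeriv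
  rw [coeff, h2, ← h1]
  have h3 : (n.factorial • (p n) fun _ => (1:ℂ)) = (n.factorial : ℂ) * p.coeff n := by
    rw [nsmul_eq_mul]; rfl
  rw [h3, mul_comm, mul_div_assoc, div_self (Nat.cast_ne_zero.mpr n.factorial_ne_zero), mul_one]

lemma series_of_diff {f : ℂ → ℂ} (hf : DifferentiableOn ℂ f (ball (0:ℂ) 1)) {t : ℝ}
    (ht0 : 0 < t) (ht1 : t < 1) :
    HasFPowerSeriesOnBall f (cauchyPowerSeries f 0 t) 0 (ENNReal.ofReal t) := by
  lift t to NNReal using ht0.le with t'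
  have h1 : closedBall (0:ℂ) t' ⊆ ball (0:ℂ) 1 := closedBall_subset_ball ht1
  have := (hf.mono h1).hasFPowerSeriesOnBall (by exact_mod_cast ht0)
  simpa [ENNReal.ofReal_coe_nnreal] using this

lemma coeff_bound {f : ℂ → ℂ} (hf : DifferentiableOn ℂ f (ball (0:ℂ) 1)) {t M : ℝ}
    (ht0 : 0 < t) (ht1 : t < 1) (hM : ∀ w ∈ sphere (0:ℂ) t, ‖f w‖ ≤ M) (k : ℕ) :
    ‖coeff f k‖ ≤ M / t ^ k := by
  have hs := series_of_diff hf ht0 ht1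
  rw [coeff_eq_seriesCoeff hs k]
  have h1 : ‖(cauchyPowerSeries f 0 t).coeff k‖ = ‖cauchyPowerSeries f 0 t k‖ :=
    (FormalMultilinearSeries.norm_apply_eq_norm_coef).symm
  rw [h1]
  refine (norm_cauchyPowerSeries_le f 0 t k).trans ?_
  have hM0 : 0 ≤ M := by
    obtain ⟨w, hw⟩ : (sphere (0:ℂ) t).Nonempty := NormedSpace.sphere_nonempty.mpr ht0.le
    exact (norm_nonneg _).trans (hM w hw)
  have hint : ∫ θ : ℝ in (0)..2 * Real.pi, ‖f (circleMap 0 t θ)‖ ≤ 2 * Real.pi * M := by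
    have hcont : ContinuousOn (fun θ : ℝ => ‖f (circleMap 0 t θ)‖) (Set.uIcc 0 (2 * Real.pi)) := by
      apply ContinuousOn.norm
      apply hf.continuousOn.comp (continuous_circleMap 0 t).continuousOn
      intro θ _
      have : circleMap 0 t θ ∈ sphere (0:ℂ) t := circleMap_mem_sphere _ ht0.le _
      exact sphere_subset_closedBall.trans (closedBall_subset_ball ht1) this
    calc ∫ θ : ℝ in (0)..2 * Real.pi, ‖f (circleMap 0 t θ)‖
        ≤ ∫ _ : ℝ in (0)..2 * Real.pi, M := by
          apply intervalIntegral.integral_mono_on Real.two_pi_pos.le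
          · exact hcont.intervalIntegrable
          · exact intervalIntegrable_const
          · intro θ _
            exact hM _ (circleMap_mem_sphere _ ht0.le _)
      _ = 2 * Real.pi * M := by simp [mul_comm]
  have habs : |t|⁻¹ ^ k = (t ^ k)⁻¹ := by
    rw [abs_of_pos ht0, inv_pow]
  rw [habs]
  rw [div_eq_mul_inv]
  apply mul_le_mul_of_nonneg_right _ (by positivity)
  calc (2 * Real.pi)⁻¹ * ∫ θ : ℝ in (0)..2 * Real.pi, ‖f (circleMap 0 t θ)‖
      ≤ (2 * Real.pi)⁻¹ * (2 * Real.pi * M) := by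
        apply mul_le_mul_of_nonneg_left hint (by positivity)
    _ = M := by field_simp

lemma coeff_sub {f g : ℂ → ℂ} (hf : DifferentiableOn ℂ f (ball (0:ℂ) 1))
    (hg : DifferentiableOn ℂ g (ball (0:ℂ) 1)) (k : ℕ) :
    coeff (f - g) k = coeff f k - coeff g k := by
  have hsf := series_of_diff hf (t := 1/2) (by norm_num) (by norm_num)
  have hsg := series_of_diff hg (t := 1/2) (by norm_num) (by norm_num)
  have hsub := hsf.sub hsg
  rw [coeff_eq_seriesCoeff hsub k, coeff_eq_seriesCoeff hsf k, coeff_eq_seriesCoeff hsg k]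
  rfl

lemma exists_coeff_bound {g : ℂ → ℂ} (hg : DifferentiableOn ℂ g (ball (0:ℂ) 1)) {t : ℝ}
    (ht0 : 0 < t) (ht1 : t < 1) : ∃ M ≥ 0, ∀ k, ‖coeff g k‖ ≤ M / t ^ k := by
  obtain ⟨C, hC⟩ := (isCompact_sphere (0:ℂ) t).exists_bound_of_continuousOn
    (hg.continuousOn.mono (sphere_subset_closedBall.trans (closedBall_subset_ball ht1)))
  refine ⟨max C 0, le_max_right _ _, fun k => ?_⟩
  exact coeff_bound hg ht0 ht1 (fun w hw => (hC w hw).trans (le_max_left _ _)) k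

lemma sqrt_lemma {r : ℝ} (hr0 : 0 ≤ r) (hr1 : r < 1) :
    ∃ s : ℝ, 0 < s ∧ s < 1 ∧ r < s * s := by
  have hmul : Real.sqrt ((1 + r) / 2) * Real.sqrt ((1 + r) / 2) = (1 + r) / 2 :=
    Real.mul_self_sqrt (by linarith)
  have hnn := Real.sqrt_nonneg ((1 + r) / 2)
  refine ⟨Real.sqrt ((1 + r) / 2), Real.sqrt_pos.mpr (by linarith), by nlinarith, by nlinarith⟩

lemma had_radius {f g : ℂ → ℂ} (hf : DifferentiableOn ℂ f (ball (0:ℂ) 1))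
    (hg : DifferentiableOn ℂ g (ball (0:ℂ) 1)) :
    (1 : ENNReal) ≤ (FormalMultilinearSeries.ofScalars ℂ
      (fun k => coeff f k * coeff g k)).radius := by
  apply ENNReal.le_of_forall_nnreal_lt
  intro r hr
  have hr1 : (r : ℝ) < 1 := by exact_mod_cast hr
  obtain ⟨s, hs0, hs1, hrs⟩ := sqrt_lemma r.coe_nonneg hr1
  obtain ⟨Mf, hMf0, hMf⟩ := exists_coeff_bound hf hs0 hs1
  obtain ⟨Mg, hMg0, hMg⟩ := exists_coeff_bound hg hs0 hs1
  apply FormalMultilinearSeries.le_radius_of_bound _ (Mf * Mg)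
  intro n
  rw [FormalMultilinearSeries.ofScalars_norm]
  have h1 : ‖coeff f n * coeff g n‖ ≤ Mf * Mg / (s * s) ^ n := by
    rw [norm_mul]
    calc ‖coeff f n‖ * ‖coeff g n‖ ≤ (Mf / s ^ n) * (Mg / s ^ n) :=
          mul_le_mul (hMf n) (hMg n) (norm_nonneg _) (by positivity)
      _ = Mf * Mg / (s * s) ^ n := by rw [mul_pow]; field_simp
  calc ‖coeff f n * coeff g n‖ * (r : ℝ) ^ n ≤ (Mf * Mg / (s * s) ^ n) * (r : ℝ) ^ n :=
        mul_le_mul_of_nonneg_right h1 (by positivity)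
    _ = Mf * Mg * ((r : ℝ) / (s * s)) ^ n := by rw [div_pow]; ring
    _ ≤ Mf * Mg * 1 := by
        apply mul_le_mul_of_nonneg_left _ (by positivity)
        apply pow_le_one₀ (by positivity)
        rw [div_le_one (by positivity)]
        exact hrs.le
    _ = Mf * Mg := mul_one _

lemma hadamard_eq_ofScalarsSum (f g : ℂ → ℂ) :
    hadamard f g = FormalMultilinearSeries.ofScalarsSum (E := ℂ)
      (fun k => coeff f k * coeff g k) := by
  funext z
  rw [FormalMultilinearSeries.ofScalars_sum_eq]
  exact tsum_congr fun k => by rw [smul_eq_mul]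

lemma hadamard_analyticOnNhd {f g : ℂ → ℂ} (hf : DifferentiableOn ℂ f (ball (0:ℂ) 1))
    (hg : DifferentiableOn ℂ g (ball (0:ℂ) 1)) :
    AnalyticOnNhd ℂ (hadamard f g) (ball (0:ℂ) 1) := by
  intro z hz
  rw [hadamard_eq_ofScalarsSum]
  have hrad := had_radius hf hg
  have hball := (FormalMultilinearSeries.ofScalars ℂ
      (fun k => coeff f k * coeff g k)).hasFPowerSeriesOnBall (lt_of_lt_of_le zero_lt_one hrad)
  exact hball.analyticAt_of_mem (by
    rw [EMetric.mem_ball, edist_zero_right]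
    calc (‖z‖₊ : ENNReal) < 1 := by
          rw [mem_ball, dist_zero_right] at hz; exact_mod_cast hz
      _ ≤ _ := hrad)

lemma summable_had {f g : ℂ → ℂ} (hf : DifferentiableOn ℂ f (ball (0:ℂ) 1))
    (hg : DifferentiableOn ℂ g (ball (0:ℂ) 1)) {z : ℂ} (hz : ‖z‖ < 1) :
    Summable (fun k => coeff f k * coeff g k * z ^ k) := by
  have hrad := had_radius hf hg
  set p := FormalMultilinearSeries.ofScalars ℂ (fun k => coeff f k * coeff g k) with hp
  have hmem : z ∈ EMetric.ball (0:ℂ) p.radius := by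
    change edist z 0 < p.radius
    rw [edist_zero_right]
    calc (‖z‖₊ : ENNReal) < 1 := by exact_mod_cast hz
      _ ≤ _ := hrad
  have := (p.hasSum hmem).summable
  apply this.congr
  intro k
  rw [hp, FormalMultilinearSeries.ofScalars_apply_eq, smul_eq_mul]

lemma analyticOnNhd_iteratedDeriv {f : ℂ → ℂ} {U : Set ℂ} (hf : AnalyticOnNhd ℂ f U)
    (hU : IsOpen U) (n : ℕ) : AnalyticOnNhd ℂ (iteratedDeriv n f) U := by
  induction n with
  | zero => simpa [iteratedDeriv_zero] using hf
  | succ n ih => rw [iteratedDeriv_succ]; exact ih.deriv_of_isOpen hU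

lemma iteratedDeriv_Pt {f : ℂ → ℂ} {r : ℝ} (hf : AnalyticOnNhd ℂ f (ball (0:ℂ) r))
    (x : ℂ) (k : ℕ) : ∀ z : ℂ, x * z ∈ ball (0:ℂ) r →
    iteratedDeriv k (Pt x f) z = x ^ k * iteratedDeriv k f (x * z) := by
  induction k with
  | zero => intro z _; simp [Pt]
  | succ k ih =>
    intro z hz
    have hUopen : IsOpen ((fun w : ℂ => x * w) ⁻¹' (ball (0:ℂ) r)) :=
      isOpen_ball.preimage (by continuity)
    have hev : iteratedDeriv k (Pt x f) =ᶠ[nhds z]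
        fun w => x ^ k * iteratedDeriv k f (x * w) := by
      filter_upwards [hUopen.mem_nhds hz] with w hw
      exact ih w hw
    rw [iteratedDeriv_succ, hev.deriv_eq]
    have hdf : HasDerivAt (iteratedDeriv k f) (deriv (iteratedDeriv k f) (x * z)) (x * z) :=
      ((analyticOnNhd_iteratedDeriv hf isOpen_ball k) _ hz).differentiableAt.hasDerivAt
    have hlin : HasDerivAt (fun w : ℂ => x * w) x z := by
      simpa using (hasDerivAt_id z).const_mul x
    have hcomp : HasDerivAt (fun w => iteratedDeriv k f (x * w))
        (deriv (iteratedDeriv k f) (x * z) * x) z := hdf.comp z hlin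
    rw [(hcomp.const_mul (x ^ k)).deriv, iteratedDeriv_succ]
    ring

lemma coeff_Pt {f : ℂ → ℂ} (hf : AnalyticAt ℂ f 0) (x : ℂ) (k : ℕ) :
    coeff (Pt x f) k = x ^ k * coeff f k := by
  have h1 : ∀ᶠ y in nhds (0:ℂ), AnalyticAt ℂ f y := hf.eventually_analyticAt
  obtain ⟨r, hr0, hr⟩ := Metric.eventually_nhds_iff_ball.mp h1
  have hf' : AnalyticOnNhd ℂ f (ball (0:ℂ) r) := fun y hy => hr y hy
  have := iteratedDeriv_Pt hf' x k 0 (by rw [mul_zero]; exact mem_ball_self hr0)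
  rw [coeff, this, mul_zero, coeff, mul_div_assoc]

lemma hadamard_Pt_left {f : ℂ → ℂ} (hf : AnalyticAt ℂ f 0) (x : ℂ) (g : ℂ → ℂ) :
    hadamard (Pt x f) g 1 = hadamard f g x := by
  unfold hadamard
  apply tsum_congr
  intro k
  rw [coeff_Pt hf x k]
  ring

lemma hadamard_Pt_both {f g : ℂ → ℂ} (hf : AnalyticAt ℂ f 0) (hg : AnalyticAt ℂ g 0)
    (x y : ℂ) : hadamard (Pt x f) (Pt y g) 1 = hadamard f g (x * y) := by
  unfold hadamard
  apply tsum_congr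
  intro k
  rw [coeff_Pt hf x k, coeff_Pt hg y k, mul_pow]
  ring

lemma hadamard_at_zero (f g : ℂ → ℂ) : hadamard f g 0 = f 0 * g 0 := by
  unfold hadamard
  rw [tsum_eq_single 0]
  · simp [coeff_zero_eq]
  · intro k hk
    rw [zero_pow hk, mul_zero]

lemma mem_closLU {R : ℝ} {U : Set (ℂ → ℂ)} {g : ℂ → ℂ} :
    g ∈ closLU R U ↔
      (UniformOnFun.ofFun (S R) g) ∈ closure ((UniformOnFun.ofFun (S R)) '' U) := by
  unfold closLU
  constructor
  · rintro ⟨h, hh, rfl⟩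
    simpa using hh
  · intro hg
    exact ⟨UniformOnFun.ofFun (S R) g, hg, rfl⟩

lemma Pt_mem_VT {V : Set (ℂ → ℂ)} {g : ℂ → ℂ} (hV : V ⊆ A0) (hg : g ∈ dual V)
    {r : ℝ} (hr0 : 0 < r) (hr1 : r < 1) : Pt ((r : ℂ)) g ∈ VT (cm V) := by
  obtain ⟨⟨hg_an, hg0⟩, hg_ne⟩ := hg
  have hrc : ‖(r : ℂ)‖ = r := by
    rw [Complex.norm_real, Real.norm_eq_abs, abs_of_pos hr0]
  refine ⟨⟨1 / r, by rw [gt_iff_lt, lt_div_iff₀ hr0]; linarith, ?_⟩, by simp [Pt, hg0], ?_⟩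
  · intro z hz
    have hmem : (r : ℂ) * z ∈ ball (0 : ℂ) 1 := by
      rw [mem_ball_zero_iff] at hz ⊢
      rw [norm_mul, hrc]
      calc r * ‖z‖ < r * (1 / r) := by
            apply mul_lt_mul_of_pos_left hz hr0
        _ = 1 := by field_simp
    have hlin : AnalyticAt ℂ (fun w : ℂ => (r : ℂ) * w) z := by
      exact analyticAt_const.mul analyticAt_id
    exact (hg_an _ hmem).comp hlin
  · rintro fc ⟨f', hf'V, x, hx, rfl⟩
    have hf'0 : AnalyticAt ℂ f' 0 := (hV hf'V).1 _ (mem_ball_self one_pos)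
    have hg0' : AnalyticAt ℂ g 0 := hg_an _ (mem_ball_self one_pos)
    rw [hadamard_Pt_both hf'0 hg0' x (r : ℂ)]
    apply hg_ne f' hf'V
    rw [mem_ball_zero_iff, norm_mul, hrc]
    calc ‖x‖ * r ≤ 1 * r := mul_le_mul_of_nonneg_right hx hr0.le
      _ = r := one_mul r
      _ < 1 := hr1

lemma tendsto_one_div_add_two : Tendsto (fun n : ℕ => ((n : ℝ) + 2)⁻¹) atTop (nhds 0) := by
  have t1 : Tendsto (fun n : ℕ => (n : ℝ) + 2) atTop atTop :=
    tendsto_atTop_add_const_right _ 2 tendsto_natCast_atTop_atTop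
  exact tendsto_inv_atTop_zero.comp t1

lemma tendsto_Pt_seq {g : ℂ → ℂ} (hcont : ContinuousOn g (ball (0:ℂ) 1)) :
    Tendsto (fun n : ℕ => UniformOnFun.ofFun (S 1) (Pt (((1 - ((n:ℝ)+2)⁻¹ : ℝ)) : ℂ) g)) atTop
      (nhds (UniformOnFun.ofFun (S 1) g)) := by
  rw [UniformOnFun.tendsto_iff_tendstoUniformlyOn]
  rintro K ⟨hK1, hK2⟩
  simp only [Function.comp_def, UniformOnFun.toFun_ofFun]
  rcases K.eq_empty_or_nonempty with rfl | hne
  · intro u _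
    filter_upwards with n z hz
    exact absurd hz (by simp)
  obtain ⟨z1, hz1K, hz1⟩ := hK2.exists_isMaxOn hne continuous_norm.continuousOn
  set ρ : ℝ := ‖z1‖ with hρ
  have hρ0 : 0 ≤ ρ := norm_nonneg _
  have hρ1 : ρ < 1 := mem_ball_zero_iff.mp (hK1 hz1K)
  have hzK : ∀ z ∈ K, ‖z‖ ≤ ρ := fun z hz => hz1 hz
  set ρ' : ℝ := (1 + ρ) / 2 with hρ'
  have hρ'1 : ρ' < 1 := by rw [hρ']; linarith
  have hρρ' : ρ < ρ' := by rw [hρ']; linarith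
  have huc : UniformContinuousOn g (closedBall (0:ℂ) ρ') :=
    (isCompact_closedBall (0:ℂ) ρ').uniformContinuousOn_of_continuous
      (hcont.mono (closedBall_subset_ball hρ'1))
  rw [Metric.tendstoUniformlyOn_iff]
  intro ε hε
  rw [Metric.uniformContinuousOn_iff] at huc
  obtain ⟨δ, hδ0, hδ⟩ := huc ε hε
  have hev : ∀ᶠ n : ℕ in atTop, ((n:ℝ)+2)⁻¹ < δ :=
    tendsto_one_div_add_two.eventually (gt_mem_nhds hδ0)
  filter_upwards [hev] with n hn z hz
  set t : ℝ := ((n:ℝ)+2)⁻¹ with ht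
  have ht0 : 0 < t := by positivity
  have ht2 : t ≤ 1/2 := by
    rw [ht]
    rw [inv_le_comm₀ (by positivity) (by norm_num)]
    push_cast
    linarith [Nat.cast_nonneg (α := ℝ) n]
  have hr0 : 0 ≤ 1 - t := by linarith
  have hr1 : 1 - t ≤ 1 := by linarith
  have hzρ : ‖z‖ ≤ ρ := hzK z hz
  have hz1' : z ∈ closedBall (0:ℂ) ρ' := by
    rw [mem_closedBall_zero_iff]; linarith
  have hz2' : ((1 - t : ℝ) : ℂ) * z ∈ closedBall (0:ℂ) ρ' := by
    rw [mem_closedBall_zero_iff, norm_mul, Complex.norm_real, Real.norm_eq_abs,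
      abs_of_nonneg hr0]
    calc (1 - t) * ‖z‖ ≤ 1 * ρ := by
          apply mul_le_mul hr1 hzρ (norm_nonneg _) one_pos.le
      _ ≤ ρ' := by linarith
  have hdist : dist z (((1 - t : ℝ) : ℂ) * z) < δ := by
    rw [dist_eq_norm]
    have : z - ((1 - t : ℝ) : ℂ) * z = ((t : ℝ) : ℂ) * z := by
      push_cast; ring
    rw [this, norm_mul, Complex.norm_real, Real.norm_eq_abs, abs_of_pos ht0]
    calc t * ‖z‖ ≤ t * 1 := by
          apply mul_le_mul_of_nonneg_left _ ht0.le
          linarith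
      _ = t := mul_one t
      _ < δ := hn
  exact hδ z hz1' (((1 - t : ℝ) : ℂ) * z) hz2' hdist

lemma dual_subset_closLU {V : Set (ℂ → ℂ)} (hV : V ⊆ A0) :
    dual V ⊆ closLU 1 (VT (cm V)) := by
  intro g hg
  rw [mem_closLU]
  have hg_an : AnalyticOnNhd ℂ g (ball (0:ℂ) 1) := hg.1.1
  apply mem_closure_of_tendsto (tendsto_Pt_seq hg_an.continuousOn)
  filter_upwards with n
  apply mem_image_of_mem
  have h2 : ((n:ℝ)+2)⁻¹ ≤ 1/2 := by
    rw [inv_le_comm₀ (by positivity) (by norm_num)]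
    push_cast
    linarith [Nat.cast_nonneg (α := ℝ) n]
  have h3 : 0 < ((n:ℝ)+2)⁻¹ := by positivity
  exact Pt_mem_VT hV hg (by linarith) (by linarith)

lemma hadamard_TUO {f h : ℂ → ℂ} (hf : DifferentiableOn ℂ f (ball (0:ℂ) 1))
    (hh : DifferentiableOn ℂ h (ball (0:ℂ) 1))
    {ι : Type*} {φ : Filter ι} {G : ι → ℂ → ℂ}
    (hG : ∀ᶠ i in φ, DifferentiableOn ℂ (G i) (ball (0:ℂ) 1))
    (hconv : ∀ K, K ⊆ ball (0:ℂ) 1 → IsCompact K → TendstoUniformlyOn G h φ K)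
    {K : Set ℂ} (hK1 : K ⊆ ball (0:ℂ) 1) (hK2 : IsCompact K) :
    TendstoUniformlyOn (fun i => hadamard f (G i)) (hadamard f h) φ K := by
  rcases K.eq_empty_or_nonempty with rfl | hne
  · intro u _
    filter_upwards with i z hz
    exact absurd hz (by simp)
  obtain ⟨z1, hz1K, hz1⟩ := hK2.exists_isMaxOn hne continuous_norm.continuousOn
  set ρ : ℝ := ‖z1‖ with hρ
  have hρ0 : 0 ≤ ρ := norm_nonneg _
  have hρ1 : ρ < 1 := mem_ball_zero_iff.mp (hK1 hz1K)
  have hzK : ∀ z ∈ K, ‖z‖ ≤ ρ := fun z hz => hz1 hz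
  obtain ⟨s, hs0, hs1, hρs⟩ := sqrt_lemma hρ0 hρ1
  obtain ⟨A, hA0, hA⟩ := exists_coeff_bound hf hs0 hs1
  set q : ℝ := ρ / (s * s) with hq
  have hq0 : 0 ≤ q := by positivity
  have hq1 : q < 1 := by
    rw [hq, div_lt_one (by positivity)]; exact hρs
  set Csum : ℝ := A * (1 - q)⁻¹ with hCsum
  have hCsum0 : 0 ≤ Csum := by
    apply mul_nonneg hA0
    rw [inv_nonneg]; linarith
  rw [Metric.tendstoUniformlyOn_iff]
  intro ε hε
  set ε' : ℝ := ε / (2 * (Csum + 1)) with hε'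
  have hε'0 : 0 < ε' := by positivity
  have hclose := (hconv (closedBall (0:ℂ) s) (closedBall_subset_ball hs1)
    (isCompact_closedBall _ _))
  rw [Metric.tendstoUniformlyOn_iff] at hclose
  filter_upwards [hclose ε' hε'0, hG] with i hi hGi z hz
  have hz1' : ‖z‖ ≤ ρ := hzK z hz
  have hzlt : ‖z‖ < 1 := hρ1.trans_le' hz1'
  set u : ℂ → ℂ := G i - h with hu
  have hu_diff : DifferentiableOn ℂ u (ball (0:ℂ) 1) := hGi.sub hh
  have hu_b : ∀ w ∈ sphere (0:ℂ) s, ‖u w‖ ≤ ε' := by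
    intro w hw
    have hw' : w ∈ closedBall (0:ℂ) s := sphere_subset_closedBall hw
    have := hi w hw'
    rw [dist_comm, dist_eq_norm] at this
    exact this.le
  have hcu : ∀ k, ‖coeff u k‖ ≤ ε' / s ^ k := coeff_bound hu_diff hs0 hs1 hu_b
  have hcoeff_u : ∀ k, coeff u k = coeff (G i) k - coeff h k := coeff_sub hGi hh
  have S1 : Summable (fun k => coeff f k * coeff (G i) k * z ^ k) := summable_had hf hGi hzlt
  have S2 : Summable (fun k => coeff f k * coeff h k * z ^ k) := summable_had hf hh hzlt
  have hdiff : hadamard f (G i) z - hadamard f h z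
      = ∑' k, coeff f k * coeff u k * z ^ k := by
    unfold hadamard
    rw [← S1.tsum_sub S2]
    apply tsum_congr
    intro k
    rw [hcoeff_u k]
    ring
  have hterm : ∀ k : ℕ, ‖coeff f k * coeff u k * z ^ k‖ ≤ A * ε' * q ^ k := by
    intro k
    rw [norm_mul, norm_mul, norm_pow]
    calc ‖coeff f k‖ * ‖coeff u k‖ * ‖z‖ ^ k
        ≤ (A / s ^ k) * (ε' / s ^ k) * ρ ^ k := by
          apply mul_le_mul _ (pow_le_pow_left₀ (norm_nonneg _) hz1' k) (by positivity)
            (by positivity)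
          exact mul_le_mul (hA k) (hcu k) (norm_nonneg _) (by positivity)
      _ = A * ε' * q ^ k := by
          rw [hq, div_pow, mul_pow]
          field_simp
  have hgeom : Summable (fun k : ℕ => A * ε' * q ^ k) :=
    (summable_geometric_of_lt_one hq0 hq1).mul_left _
  have hnorm : ‖∑' k, coeff f k * coeff u k * z ^ k‖ ≤ A * ε' * (1 - q)⁻¹ := by
    have hsum_norm : Summable (fun k => ‖coeff f k * coeff u k * z ^ k‖) :=
      Summable.of_nonneg_of_le (fun k => norm_nonneg _) hterm hgeom
    calc ‖∑' k, coeff f k * coeff u k * z ^ k‖ ≤ ∑' k, ‖coeff f k * coeff u k * z ^ k‖ :=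
          norm_tsum_le_tsum_norm hsum_norm
      _ ≤ ∑' k : ℕ, A * ε' * q ^ k := hsum_norm.tsum_le_tsum hterm hgeom
      _ = A * ε' * (1 - q)⁻¹ := by
          rw [tsum_mul_left, tsum_geometric_of_lt_one hq0 hq1]
  rw [dist_eq_norm, ← neg_sub, norm_neg, hdiff]
  calc ‖∑' k, coeff f k * coeff u k * z ^ k‖ ≤ A * ε' * (1 - q)⁻¹ := hnorm
    _ = Csum * ε' := by rw [hCsum]; ring
    _ ≤ (Csum + 1) * ε' := by nlinarith
    _ = ε / 2 := by rw [hε']; field_simp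
    _ < ε := by linarith

lemma closLU_subset_dual {V : Set (ℂ → ℂ)} (hV : V ⊆ A0) :
    closLU 1 (VT (cm V)) ⊆ dual V := by
  intro h hmem
  rw [mem_closLU] at hmem
  set s : Set (ℂ →ᵤ[S 1] ℂ) := (UniformOnFun.ofFun (S 1)) '' VT (cm V) with hs
  set φ : Filter (ℂ →ᵤ[S 1] ℂ) := nhdsWithin (UniformOnFun.ofFun (S 1) h) s with hφ
  haveI hne : φ.NeBot := mem_closure_iff_nhdsWithin_neBot.mp hmem
  set G : (ℂ →ᵤ[S 1] ℂ) → ℂ → ℂ := fun i => UniformOnFun.toFun (S 1) i with hG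
  have htend : Tendsto (fun i => i) φ (nhds (UniformOnFun.ofFun (S 1) h)) :=
    tendsto_id.mono_left nhdsWithin_le_nhds
  have hconv : ∀ K, K ⊆ ball (0:ℂ) 1 → IsCompact K → TendstoUniformlyOn G h φ K := by
    have h2 := UniformOnFun.tendsto_iff_tendstoUniformlyOn.mp htend
    intro K h3 h4
    exact h2 K ⟨h3, h4⟩
  have hmemVT : ∀ᶠ i in φ, G i ∈ VT (cm V) := by
    filter_upwards [eventually_mem_nhdsWithin] with i hi
    obtain ⟨u, hu, rfl⟩ := hi
    simpa [hG] using hu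
  have hGdiff : ∀ᶠ i in φ, DifferentiableOn ℂ (G i) (ball (0:ℂ) 1) := by
    filter_upwards [hmemVT] with i hi
    obtain ⟨⟨R, hR, han⟩, _, _⟩ := hi
    exact (han.mono (ball_subset_ball (by linarith))).differentiableOn
  have hTLUO : TendstoLocallyUniformlyOn G h φ (ball (0:ℂ) 1) :=
    (tendstoLocallyUniformlyOn_iff_forall_isCompact isOpen_ball).mpr
      (fun K hK1 hK2 => hconv K hK1 hK2)
  have hh_diff : DifferentiableOn ℂ h (ball (0:ℂ) 1) :=
    hTLUO.differentiableOn hGdiff isOpen_ball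
  have hh0 : h 0 = 1 := by
    have h0K := (hconv {0} (by simp) isCompact_singleton).tendsto_at (mem_singleton 0)
    have hconst : Tendsto (fun i => G i 0) φ (nhds 1) := by
      apply Tendsto.congr' _ tendsto_const_nhds
      filter_upwards [hmemVT] with i hi
      exact hi.2.1.symm
    exact tendsto_nhds_unique h0K hconst
  refine ⟨⟨hh_diff.analyticOnNhd isOpen_ball, hh0⟩, ?_⟩
  intro f hfV z0 hz0 hzero
  have hf_an : AnalyticOnNhd ℂ f (ball (0:ℂ) 1) := (hV hfV).1
  have hf_diff : DifferentiableOn ℂ f (ball (0:ℂ) 1) := hf_an.differentiableOn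
  have hf0 : f 0 = 1 := (hV hfV).2
  set H : ℂ → ℂ := hadamard f h with hH
  have hH_an : AnalyticOnNhd ℂ H (ball (0:ℂ) 1) := hadamard_analyticOnNhd hf_diff hh_diff
  have hH0 : H 0 = 1 := by rw [hH, hadamard_at_zero, hf0, hh0, one_mul]
  rcases (hH_an z0 hz0).eventually_eq_zero_or_eventually_ne_zero with hcase | hcase
  · have hEq : H =ᶠ[nhds z0] 0 := hcase.mono fun x hx => by simpa using hx
    have hzeros := hH_an.eqOn_zero_of_preconnected_of_eventuallyEq_zero
      (convex_ball (0:ℂ) 1).isPreconnected hz0 hEq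
    have : H 0 = 0 := hzeros (mem_ball_self one_pos)
    rw [hH0] at this
    exact one_ne_zero this
  · rw [eventually_nhdsWithin_iff, Metric.eventually_nhds_iff] at hcase
    obtain ⟨ρ1, hρ1pos, hρ1⟩ := hcase
    have hz0n : ‖z0‖ < 1 := mem_ball_zero_iff.mp hz0
    set ρ : ℝ := min (ρ1 / 2) ((1 - ‖z0‖) / 2) with hρdef
    have hρ0 : 0 < ρ := lt_min (by linarith) (by linarith)
    have hρa : ρ ≤ ρ1 / 2 := min_le_left _ _
    have hρb : ρ ≤ (1 - ‖z0‖) / 2 := min_le_right _ _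
    have hsub : closedBall z0 ρ ⊆ ball (0:ℂ) 1 := by
      intro w hw
      rw [mem_closedBall, dist_eq_norm] at hw
      rw [mem_ball_zero_iff]
      have h1 : ‖w‖ - ‖z0‖ ≤ ‖w - z0‖ := norm_sub_norm_le w z0
      linarith
    have hHneS : ∀ w ∈ sphere z0 ρ, H w ≠ 0 := by
      intro w hw
      rw [mem_sphere] at hw
      apply hρ1
      · rw [hw]; linarith
      · rw [mem_compl_singleton_iff]
        intro hww
        rw [hww] at hw
        simp at hw
        linarith
    have hcontH : ContinuousOn H (sphere z0 ρ) :=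
      hH_an.continuousOn.mono (sphere_subset_closedBall.trans hsub)
    obtain ⟨w0, hw0S, hw0min⟩ := (isCompact_sphere z0 ρ).exists_isMinOn
      (NormedSpace.sphere_nonempty.mpr hρ0.le) hcontH.norm
    set m : ℝ := ‖H w0‖ with hm
    have hm0 : 0 < m := norm_pos_iff.mpr (hHneS w0 hw0S)
    have hmmin : ∀ w ∈ sphere z0 ρ, m ≤ ‖H w‖ := fun w hw => hw0min hw
    have hTUO := hadamard_TUO hf_diff hh_diff hGdiff hconv hsub (isCompact_closedBall z0 ρ)
    rw [Metric.tendstoUniformlyOn_iff] at hTUO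
    obtain ⟨i, hiVT, hiC, hiD⟩ := (hmemVT.and ((hTUO (m / 2) (by linarith)).and hGdiff)).exists
    set Hi : ℂ → ℂ := hadamard f (G i) with hHi
    have hHi_an : AnalyticOnNhd ℂ Hi (ball (0:ℂ) 1) := hadamard_analyticOnNhd hf_diff hiD
    have hf00 : AnalyticAt ℂ f 0 := hf_an _ (mem_ball_self one_pos)
    have hHi_ne : ∀ x ∈ ball (0:ℂ) 1, Hi x ≠ 0 := by
      intro x hx
      rw [hHi, ← hadamard_Pt_left hf00 x (G i)]
      exact hiVT.2.2 (Pt x f) ⟨f, hfV, x, (mem_ball_zero_iff.mp hx).le, rfl⟩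
    have hHiS : ∀ w ∈ sphere z0 ρ, m / 2 ≤ ‖Hi w‖ := by
      intro w hw
      have h1 := hiC w (sphere_subset_closedBall hw)
      have h2 := hmmin w hw
      rw [dist_eq_norm] at h1
      have h3 : ‖H w‖ - ‖Hi w‖ ≤ ‖H w - Hi w‖ := norm_sub_norm_le _ _
      linarith
    set inv : ℂ → ℂ := fun w => (Hi w)⁻¹ with hinv
    have hd : DiffContOnCl ℂ inv (ball z0 ρ) := by
      constructor
      · apply DifferentiableOn.inv
        · exact hHi_an.differentiableOn.mono (ball_subset_closedBall.trans hsub)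
        · exact fun x hx => hHi_ne x (hsub (ball_subset_closedBall hx))
      · rw [closure_ball z0 hρ0.ne']
        apply ContinuousOn.inv₀
        · exact hHi_an.continuousOn.mono hsub
        · exact fun x hx => hHi_ne x (hsub hx)
    have hfr : ∀ w ∈ frontier (ball z0 ρ), ‖inv w‖ ≤ (m / 2)⁻¹ := by
      rw [frontier_ball z0 hρ0.ne']
      intro w hw
      rw [hinv, norm_inv]
      apply inv_anti₀ (by linarith)
      exact hHiS w hw
    have hz0cl : z0 ∈ closure (ball z0 ρ) := by
      rw [closure_ball z0 hρ0.ne']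
      exact mem_closedBall_self hρ0.le
    have hbound := Complex.norm_le_of_forall_mem_frontier_norm_le isBounded_ball hd hfr hz0cl
    have hHiz0 : Hi z0 ≠ 0 := hHi_ne z0 hz0
    have hHiz0p : 0 < ‖Hi z0‖ := norm_pos_iff.mpr hHiz0
    rw [hinv] at hbound
    simp only [norm_inv] at hbound
    have hge : m / 2 ≤ ‖Hi z0‖ := by
      have := (inv_le_inv₀ hHiz0p (by linarith : (0:ℝ) < m / 2)).mp hbound
      linarith
    have hlt : ‖Hi z0‖ < m / 2 := by
      have := hiC z0 (mem_closedBall_self hρ0.le)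
      rw [dist_eq_norm, ← hH, hzero] at this
      simpa using this
    linarith

theorem stmt10 (V : Set (ℂ → ℂ)) (hV : V ⊆ A0) :
    dual V = closLU 1 (VT (cm V)) :=
  Set.Subset.antisymm (dual_subset_closLU hV) (closLU_subset_dual hV)
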